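/- Let F be a prime filter on a De Morgan lattice L, and define h_F : L → Bool × Bool by h_F(x) = (decide (x ∈ F), decide (¬x ∉ F)). Then h_F is a homomorphism of De Morgan lattices from L to DM₁ and F = h_F⁻¹(D₁). Moreover, if F is complete then (h_F x).2 = true implies (h_F x).1 = true for all x; if F is consistent then (h_F x).1 = true implies (h_F x).2 = true for all x; and if F is classical then (h_F x).1 = (h_F x).2 for all x. -/
import Mathlib


/-- A De Morgan lattice: a distributive lattice with an antitone involution. -/
class DeMorgan (L : Type*) extends DistribLattice L where
  dneg : L → L
  dneg_dneg : ∀ x : L, dneg (dneg x) = x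
  dneg_sup : ∀ x y : L, dneg (x ⊔ y) = dneg x ⊓ dneg y

prefix:max "∼" => DeMorgan.dneg

section Defs

variable {α : Type*}

/-- An upward closed subset of a lattice. -/
def IsUpset [Lattice α] (F : Set α) : Prop :=
  ∀ ⦃x y : α⦄, x ∈ F → x ≤ y → y ∈ F

/-- A lattice filter: an upset closed under binary meets. -/
def IsLatFilter [Lattice α] (F : Set α) : Prop :=
  IsUpset F ∧ ∀ x y : α, x ∈ F → y ∈ F → x ⊓ y ∈ F

/-- An `n`-filter: an upset such that for every nonempty finite `Y`, if the meet of
every nonempty subset of `Y` of size at most `n` lies in `F`, then so does the meet of `Y`. -/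
def IsNFilter [Lattice α] (n : ℕ) (F : Set α) : Prop :=
  IsUpset F ∧ ∀ (Y : Finset α) (hY : Y.Nonempty),
    (∀ (X : Finset α) (hX : X.Nonempty), X ⊆ Y → X.card ≤ n → X.inf' hX id ∈ F) →
    Y.inf' hY id ∈ F

/-- A prime upset: `x ⊔ y ∈ F` implies `x ∈ F` or `y ∈ F`. -/
def IsPrimeUpset [Lattice α] (F : Set α) : Prop :=
  ∀ x y : α, x ⊔ y ∈ F → x ∈ F ∨ y ∈ F

/-- A downward closed subset of a lattice. -/
def IsDownset [Lattice α] (I : Set α) : Prop :=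
  ∀ ⦃x y : α⦄, x ∈ I → y ≤ x → y ∈ I

/-- A lattice ideal: a downset closed under binary joins. -/
def IsIdeal [Lattice α] (I : Set α) : Prop :=
  IsDownset I ∧ ∀ x y : α, x ∈ I → y ∈ I → x ⊔ y ∈ I

/-- An `n`-ideal: the order dual notion of an `n`-filter. -/
def IsNIdeal [Lattice α] (n : ℕ) (I : Set α) : Prop :=
  IsDownset I ∧ ∀ (Y : Finset α) (hY : Y.Nonempty),
    (∀ (X : Finset α) (hX : X.Nonempty), X ⊆ Y → X.card ≤ n → X.sup' hX id ∈ I) →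
    Y.sup' hY id ∈ I

variable {L : Type*} [DeMorgan L]

/-- Almost complete upset: `x ∈ F` implies `x ⊓ (y ⊔ ∼y) ∈ F`. -/
def AlmostComplete (F : Set L) : Prop := ∀ x ∈ F, ∀ y : L, x ⊓ (y ⊔ ∼y) ∈ F

/-- Complete upset: almost complete and nonempty. -/
def IsCompleteUpset (F : Set L) : Prop := AlmostComplete F ∧ F.Nonempty

/-- Almost consistent upset: `(x ⊓ ∼x) ⊔ y ∈ F` implies `y ∈ F`. -/
def AlmostConsistent (F : Set L) : Prop := ∀ x y : L, (x ⊓ ∼x) ⊔ y ∈ F → y ∈ F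

/-- Consistent upset: almost consistent and not total. -/
def IsConsistentUpset (F : Set L) : Prop := AlmostConsistent F ∧ F ≠ Set.univ

/-- Classical upset: complete and consistent. -/
def IsClassicalUpset (F : Set L) : Prop := IsCompleteUpset F ∧ IsConsistentUpset F

/-- Kalman upset. -/
def IsKalmanUpset (F : Set L) : Prop :=
  ∀ x y z u : L, ((x ⊓ ∼x) ⊓ z) ⊔ u ∈ F → ((y ⊔ ∼y) ⊓ z) ⊔ u ∈ F

/-- A homomorphism of De Morgan lattices. -/
def IsDMHom {L M : Type*} [DeMorgan L] [DeMorgan M] (h : L → M) : Prop :=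
  (∀ x y : L, h (x ⊓ y) = h x ⊓ h y) ∧ (∀ x y : L, h (x ⊔ y) = h x ⊔ h y) ∧
    ∀ x : L, h (∼x) = ∼(h x)

/-- The filter generated by all elements of the form `x ⊔ ∼x`. -/
def Fcomp (L : Type*) [DeMorgan L] : Set L :=
  {a | ∃ (s : Finset L) (hs : s.Nonempty), s.inf' hs (fun x => x ⊔ ∼x) ≤ a}

/-- The `n`-filter generated by a set. -/
def nFilterGen (n : ℕ) (U : Set L) : Set L :=
  ⋂₀ {F : Set L | IsNFilter n F ∧ U ⊆ F}

/-- `Comp U`. -/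
def CompCl (U : Set L) : Set L := {x | ∃ a ∈ U, ∃ f ∈ Fcomp L, a ⊓ f ≤ x}

/-- `Cons U`. -/
def ConsCl (U : Set L) : Set L := {x | ∃ f ∈ Fcomp L, ∼f ⊔ x ∈ U}

/-- A congruence of De Morgan lattices, as a binary relation. -/
def IsCongruence (θ : L → L → Prop) : Prop :=
  Equivalence θ ∧
  (∀ a b c d : L, θ a b → θ c d → θ (a ⊓ c) (b ⊓ d)) ∧
  (∀ a b c d : L, θ a b → θ c d → θ (a ⊔ c) (b ⊔ d)) ∧
  ∀ a b : L, θ a b → θ (∼a) (∼b)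

end Defs

/-- The four-element De Morgan lattice `DM₁` on `Bool × Bool`. -/
instance : DeMorgan (Bool × Bool) :=
  { (inferInstance : DistribLattice (Bool × Bool)) with
    dneg := fun p => (!p.2, !p.1)
    dneg_dneg := by decide
    dneg_sup := by decide }

/-- Powers of `DM₁`, with componentwise operations. -/
instance {ι : Type*} : DeMorgan (ι → Bool × Bool) :=
  { (inferInstance : DistribLattice (ι → Bool × Bool)) with
    dneg := fun f i => ∼(f i)
    dneg_dneg := fun f => funext fun i => DeMorgan.dneg_dneg (f i)
    dneg_sup := fun f g => funext fun i => DeMorgan.dneg_sup (f i) (g i) }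

/-- the canonical map `h_F` determined by a prime filter `F` on a De Morgan
lattice is a De Morgan homomorphism into `DM₁` with `F = h_F⁻¹(D₁)`, and it lands in the
appropriate subalgebra when `F` is complete, consistent, or classical. -/
theorem statement0 {L : Type*} [DeMorgan L] [Nonempty L] (F : Set L)
    [DecidablePred (· ∈ F)]
    (hFil : IsLatFilter F) (hPrime : IsPrimeUpset F)
    (h : L → Bool × Bool)
    (hdef : ∀ x : L, h x = (decide (x ∈ F), decide (∼x ∉ F))) :
    IsDMHom h ∧ F = h ⁻¹' {p : Bool × Bool | p.1 = true} ∧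
    (IsCompleteUpset F → ∀ x : L, (h x).2 = true → (h x).1 = true) ∧
    (IsConsistentUpset F → ∀ x : L, (h x).1 = true → (h x).2 = true) ∧
    (IsClassicalUpset F → ∀ x : L, (h x).1 = (h x).2) := by
  obtain ⟨hUp, hMeet⟩ := hFil
  have dneg_inf : ∀ x y : L, ∼(x ⊓ y) = ∼x ⊔ ∼y := by
    intro x y
    have := congrArg DeMorgan.dneg (DeMorgan.dneg_sup (∼x) (∼y))
    simpa [DeMorgan.dneg_dneg] using this.symm
  have memInf : ∀ x y : L, x ⊓ y ∈ F ↔ x ∈ F ∧ y ∈ F := by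
    intro x y
    constructor
    · intro hxy
      exact ⟨hUp hxy inf_le_left, hUp hxy inf_le_right⟩
    · rintro ⟨hx, hy⟩; exact hMeet x y hx hy
  have memSup : ∀ x y : L, x ⊔ y ∈ F ↔ x ∈ F ∨ y ∈ F := by
    intro x y
    constructor
    · exact hPrime x y
    · rintro (hx | hy)
      · exact hUp hx le_sup_left
      · exact hUp hy le_sup_right
  refine ⟨⟨?_, ?_, ?_⟩, ?_, ?_, ?_, ?_⟩
  · intro x y
    rw [hdef, hdef, hdef]
    have h1 : (x ⊓ y ∈ F) ↔ (x ∈ F ∧ y ∈ F) := memInf x y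
    have h2 : (∼(x ⊓ y) ∉ F) ↔ (∼x ∉ F ∧ ∼y ∉ F) := by
      rw [dneg_inf, memSup]; tauto
    have e1 : decide (x ⊓ y ∈ F) = (decide (x ∈ F) && decide (y ∈ F)) := by
      simp [h1]
    have e2 : decide (∼(x ⊓ y) ∉ F) = (decide (∼x ∉ F) && decide (∼y ∉ F)) := by
      simp [h2]
    show (_, _) = ((_, _) : Bool × Bool) ⊓ (_, _)
    refine Prod.ext ?_ ?_ <;> simp only [Prod.inf_def, e1, e2] <;>
      cases decide (x ∈ F) <;> cases decide (y ∈ F) <;>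
      cases decide (∼x ∉ F) <;> cases decide (∼y ∉ F) <;> decide
  · intro x y
    rw [hdef, hdef, hdef]
    have h1 : (x ⊔ y ∈ F) ↔ (x ∈ F ∨ y ∈ F) := memSup x y
    have h2 : (∼(x ⊔ y) ∉ F) ↔ (∼x ∉ F ∨ ∼y ∉ F) := by
      rw [DeMorgan.dneg_sup, memInf]; tauto
    have e1 : decide (x ⊔ y ∈ F) = (decide (x ∈ F) || decide (y ∈ F)) := by
      simp [h1]
    have e2 : decide (∼(x ⊔ y) ∉ F) = (decide (∼x ∉ F) || decide (∼y ∉ F)) := by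
      simp [h2]
    refine Prod.ext ?_ ?_ <;> simp only [Prod.sup_def, e1, e2] <;>
      cases decide (x ∈ F) <;> cases decide (y ∈ F) <;>
      cases decide (∼x ∉ F) <;> cases decide (∼y ∉ F) <;> decide
  · intro x
    rw [hdef, hdef]
    show (_, _) = (_, _)
    refine Prod.ext ?_ ?_ <;> simp [DeMorgan.dneg_dneg, decide_not]
  · ext x
    simp [hdef]
  · rintro ⟨hAC, a, ha⟩ x hx
    rw [hdef] at hx ⊢
    simp only [decide_eq_true_eq] at hx ⊢
    have h1 : x ⊔ ∼x ∈ F := hUp (hAC a ha x) inf_le_right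
    rcases hPrime x (∼x) h1 with h2 | h2
    · exact h2
    · exact absurd h2 hx
  · rintro ⟨hACons, hne⟩ x hx
    rw [hdef] at hx ⊢
    simp only [decide_eq_true_eq] at hx ⊢
    intro hnx
    apply hne
    ext y
    simp only [Set.mem_univ, iff_true]
    exact hACons x y (hUp (hMeet x (∼x) hx hnx) le_sup_left)
  · rintro ⟨hComp, hCons⟩ x
    rw [hdef]
    by_cases h1 : x ∈ F <;> by_cases h2 : ∼x ∈ F
    · simp only [h1, h2]
      exfalso
      exact hCons.2 (by
        ext y
        simp only [Set.mem_univ, iff_true]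
        exact hCons.1 x y (hUp (hMeet x (∼x) h1 h2) le_sup_left))
    · simp [h1, h2]
    · simp [h1, h2]
    · simp only [h1, h2]
      exfalso
      obtain ⟨a, ha⟩ := hComp.2
      have := hUp (hComp.1 a ha x) inf_le_right
      rcases hPrime x (∼x) this with hc | hc
      · exact h1 hc
      · exact h2 hc
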